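/- For the 7-dimensional Lie algebra L_{7,7} with nonzero brackets [X_1,X_2]=2X_2, [X_1,X_3]=-2X_3, [X_2,X_3]=X_1, [X_1,X_4]=X_4, [X_1,X_5]=-X_5, [X_2,X_5]=X_4, [X_2,X_7]=X_6, [X_3,X_4]=X_5, [X_1,X_6]=X_6, [X_1,X_7]=-X_7, [X_3,X_6]=X_7, the polynomial I_1 = x_4 x_7 - x_5 x_6 is annihilated by all coadjoint vector fields X̂_i = C_{ij}^k x_k ∂/∂x_j, i = 1,…,7. -/

import Mathlib

open scoped BigOperators

noncomputable def Xhat {n : ℕ} (C : Fin n → Fin n → Fin n → ℝ)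
    (F : (Fin n → ℝ) → ℝ) (i : Fin n) (x : Fin n → ℝ) : ℝ :=
  ∑ j, ∑ k, C i j k * x k * fderiv ℝ F x (Pi.single j 1)

def C77 : Fin 7 → Fin 7 → Fin 7 → ℝ := fun i j k =>
  match i.1, j.1, k.1 with
  | 0, 1, 1 => 2
  | 1, 0, 1 => -2
  | 0, 2, 2 => -2
  | 2, 0, 2 => 2
  | 1, 2, 0 => 1
  | 2, 1, 0 => -1
  | 0, 3, 3 => 1
  | 3, 0, 3 => -1
  | 0, 4, 4 => -1
  | 4, 0, 4 => 1
  | 1, 4, 3 => 1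
  | 4, 1, 3 => -1
  | 1, 6, 5 => 1
  | 6, 1, 5 => -1
  | 2, 3, 4 => 1
  | 3, 2, 4 => -1
  | 0, 5, 5 => 1
  | 5, 0, 5 => -1
  | 0, 6, 6 => -1
  | 6, 0, 6 => 1
  | 2, 5, 6 => 1
  | 5, 2, 6 => -1
  | _, _, _ => 0

theorem fd77 (x : Fin 7 → ℝ) (j : Fin 7) :
    fderiv ℝ (fun y : Fin 7 → ℝ => y 3 * y 6 - y 4 * y 5) x (Pi.single j 1) =
      x 3 * (Pi.single j 1 : Fin 7 → ℝ) 6 + x 6 * (Pi.single j 1 : Fin 7 → ℝ) 3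
        - (x 4 * (Pi.single j 1 : Fin 7 → ℝ) 5 + x 5 * (Pi.single j 1 : Fin 7 → ℝ) 4) := by
  have pr : ∀ k : Fin 7, HasFDerivAt (fun y : Fin 7 → ℝ => y k)
      (ContinuousLinearMap.proj (R := ℝ) (φ := fun _ : Fin 7 => ℝ) k) x := fun k =>
    (ContinuousLinearMap.proj (R := ℝ) (φ := fun _ : Fin 7 => ℝ) k).hasFDerivAt
  have h := (((pr 3).mul (pr 6)).sub ((pr 4).mul (pr 5))).fderiv
  rw [show (fun y : Fin 7 → ℝ => y 3 * y 6 - y 4 * y 5) =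
      ((fun y : Fin 7 → ℝ => y 3) * fun y => y 6) - (fun y : Fin 7 → ℝ => y 4) * fun y => y 5 from rfl, h]
  simp [ContinuousLinearMap.proj_apply]

set_option maxHeartbeats 2000000 in
theorem L77_invariant :
    ∀ (i : Fin 7) (x : Fin 7 → ℝ),
      Xhat C77 (fun y => y 3 * y 6 - y 4 * y 5) i x = 0 := by
  intro i x
  unfold Xhat
  simp only [Fin.sum_univ_seven, fd77]
  fin_cases i <;>
    · simp (config := { decide := true }) [C77, Pi.single_apply]
      try ring
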